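/- Let ζ₁,...,ζ_d be complex numbers with |ζ₁| > ... > |ζ_d| > 0 and |ζ_{i+1}|/|ζᵢ| < 2^{-(1+b)} for all i, where b ≥ 1 + log₂ d. Then for every 1 ≤ r ≤ d, the r-th elementary symmetric function satisfies Σ_{i₁<...<i_r} ζ_{i₁}···ζ_{i_r} = ζ₁···ζ_r · (1 + ε) with |ε| < 2^{-b}. -/

import Mathlib

open Finset





lemma esd_dbl (a : ℕ → ℕ) : ∀ r : ℕ,
    ∑ j ∈ range r, ∑ l ∈ range (j + 1), a l = ∑ l ∈ range r, (r - l) * a l := by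
  intro r
  induction r with
  | zero => simp
  | succ n ih =>
    have h2 : ∀ l ∈ range n, (n + 1 - l) * a l = (n - l) * a l + a l := by
      intro l hl
      rw [Finset.mem_range] at hl
      have : n + 1 - l = (n - l) + 1 := by omega
      rw [this]; ring
    rw [Finset.sum_range_succ _ n, ih, Finset.sum_range_succ (fun l => (n + 1 - l) * a l) n,
      Finset.sum_congr rfl h2, Finset.sum_add_distrib, Finset.sum_range_succ a n]
    simp
    omega

lemma esd_weier {ι : Type*} (s : Finset ι) (f : ι → ℝ) (h0 : ∀ i ∈ s, 0 ≤ f i)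
    (h1 : ∀ i ∈ s, f i ≤ 1) : 1 - ∑ i ∈ s, f i ≤ ∏ i ∈ s, (1 - f i) := by
  induction s using Finset.cons_induction with
  | empty => simp
  | cons i s hi ih =>
    rw [Finset.sum_cons, Finset.prod_cons]
    have h0i := h0 i (Finset.mem_cons_self i s)
    have h1i := h1 i (Finset.mem_cons_self i s)
    have ih' := ih (fun j hj => h0 j (Finset.mem_cons_of_mem hj))
      (fun j hj => h1 j (Finset.mem_cons_of_mem hj))
    have hs0 : 0 ≤ ∑ j ∈ s, f j := Finset.sum_nonneg (fun j hj => h0 j (Finset.mem_cons_of_mem hj))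
    nlinarith [ih']

lemma esd_geom (x : ℝ) (h0 : 0 ≤ x) (h1 : x < 1) (n : ℕ) :
    ∑ g ∈ range n, x ^ g ≤ (1 - x)⁻¹ := by
  have hx : (0:ℝ) < 1 - x := by linarith
  have h := geom_sum_mul x n
  have hp : (0:ℝ) ≤ x ^ n := pow_nonneg h0 n
  rw [inv_eq_one_div, le_div_iff₀ hx]
  nlinarith

lemma esd_strictmono_le {r d : ℕ} (f : Fin r → Fin d) (hf : StrictMono f) (j : Fin r) :
    (j : ℕ) ≤ (f j : ℕ) := by
  suffices h : ∀ n : ℕ, ∀ j : Fin r, (j : ℕ) = n → n ≤ (f j : ℕ) from h j j rfl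
  intro n
  induction n with
  | zero => omega
  | succ n ih =>
    intro j hj
    have hn : n < r := by omega
    have hlt : (⟨n, hn⟩ : Fin r) < j := by rw [Fin.lt_def]; simp only [Fin.val_mk]; omega
    have h1 := hf hlt
    have h2 := ih ⟨n, hn⟩ rfl
    rw [Fin.lt_def] at h1
    omega





section Aux

lemma esd_geom_lt (x : ℝ) (h0 : 0 < x) (h1 : x < 1) (n : ℕ) :
    ∑ g ∈ range n, x ^ g < (1 - x)⁻¹ := by
  have hx : (0:ℝ) < 1 - x := by linarith
  have h := geom_sum_mul x n
  have hp : (0:ℝ) < x ^ n := pow_pos h0 n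
  rw [inv_eq_one_div, lt_div_iff₀ hx]
  nlinarith

/-- The "gap" function of a sorted `r`-subset encoded by its order embedding. -/
noncomputable def esdPhi (d r : ℕ) (s : Finset (Fin d)) (h : s.card = r) (j : Fin r) : ℕ :=
  if hj : (j : ℕ) = 0 then (s.orderEmbOfFin h j : ℕ)
  else (s.orderEmbOfFin h j : ℕ) -
    (s.orderEmbOfFin h ⟨(j : ℕ) - 1, Nat.lt_of_le_of_lt (Nat.sub_le _ _) j.isLt⟩ : ℕ) - 1

noncomputable def esdPhi' (d r : ℕ) (s : Finset (Fin d)) (h : s.card = r) (l : ℕ) : ℕ :=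
  if hl : l < r then esdPhi d r s h ⟨l, hl⟩ else 0

lemma esd_sigma (d r : ℕ) (s : Finset (Fin d)) (h : s.card = r) (j : Fin r) :
    (s.orderEmbOfFin h j : ℕ) = (j : ℕ) + ∑ l ∈ range ((j : ℕ) + 1), esdPhi' d r s h l := by
  suffices H : ∀ n : ℕ, ∀ j : Fin r, (j : ℕ) = n →
      (s.orderEmbOfFin h j : ℕ) = (j : ℕ) + ∑ l ∈ range ((j : ℕ) + 1), esdPhi' d r s h l from
    H _ j rfl
  intro n
  induction n with
  | zero =>
    intro j hj
    have hl : (0:ℕ) < r := j.pos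
    have e1 : esdPhi' d r s h 0 = (s.orderEmbOfFin h j : ℕ) := by
      rw [esdPhi', dif_pos hl, esdPhi]
      have hje : (⟨0, hl⟩ : Fin r) = j := Fin.ext (by simp only [Fin.val_mk]; omega)
      rw [dif_pos (by simp : ((⟨0, hl⟩ : Fin r) : ℕ) = 0), hje]
    rw [hj, Finset.sum_range_one, e1, Nat.zero_add]
  | succ n ih =>
    intro j hj
    have hn : n < r := by omega
    have h1 : (⟨n, hn⟩ : Fin r) < j := by show n < (j:ℕ); omega
    have hlt : (s.orderEmbOfFin h ⟨n, hn⟩ : ℕ) < (s.orderEmbOfFin h j : ℕ) :=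
      (s.orderEmbOfFin h).strictMono h1
    have hihp := ih ⟨n, hn⟩ rfl
    simp only [Fin.val_mk] at hihp
    have hphi : esdPhi d r s h j =
        (s.orderEmbOfFin h j : ℕ) - (s.orderEmbOfFin h ⟨n, hn⟩ : ℕ) - 1 := by
      have hidx : (⟨(j:ℕ) - 1, Nat.lt_of_le_of_lt (Nat.sub_le _ _) j.isLt⟩ : Fin r)
          = ⟨n, hn⟩ := Fin.ext (by simp only [Fin.val_mk]; omega)
      rw [esdPhi, dif_neg (by omega : ¬ ((j:ℕ) = 0)), hidx]
    have hphin : esdPhi' d r s h (n + 1) = esdPhi d r s h j := by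
      rw [esdPhi', dif_pos (show n + 1 < r by omega)]
      congr 1
      exact Fin.ext (by simp only [Fin.val_mk]; omega)
    rw [hj, Finset.sum_range_succ, hphin]
    omega

lemma esd_phi_lt (d r : ℕ) (s : Finset (Fin d)) (h : s.card = r) (j : Fin r) :
    esdPhi d r s h j < d := by
  have h1 := (s.orderEmbOfFin h j).isLt
  rw [esdPhi]
  split <;> omega

lemma esd_M (d r : ℕ) (s : Finset (Fin d)) (h : s.card = r) :
    (∑ j : Fin r, ((s.orderEmbOfFin h j : ℕ) - (j : ℕ)))
      = ∑ l ∈ range r, (r - l) * esdPhi' d r s h l := by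
  rw [← esd_dbl]
  have h1 : ∀ j : Fin r, ((s.orderEmbOfFin h j : ℕ) - (j : ℕ))
      = ∑ l ∈ range ((j:ℕ) + 1), esdPhi' d r s h l := by
    intro j
    have := esd_sigma d r s h j
    omega
  rw [Finset.sum_congr rfl (fun j _ => h1 j)]
  exact Fin.sum_univ_eq_sum_range (fun n => ∑ l ∈ range (n + 1), esdPhi' d r s h l) r

lemma esd_inj (d r : ℕ) (s s' : Finset (Fin d)) (h : s.card = r) (h' : s'.card = r)
    (heq : ∀ j : Fin r, esdPhi d r s h j = esdPhi d r s' h' j) : s = s' := by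
  have hphi' : ∀ l : ℕ, esdPhi' d r s h l = esdPhi' d r s' h' l := by
    intro l
    rw [esdPhi', esdPhi']
    split
    · rw [heq]
    · rfl
  have hval : ∀ j : Fin r, s.orderEmbOfFin h j = s'.orderEmbOfFin h' j := by
    intro j
    refine Fin.ext ?_
    rw [esd_sigma d r s h j, esd_sigma d r s' h' j]
    exact congrArg _ (Finset.sum_congr rfl fun l _ => hphi' l)
  apply Finset.coe_injective
  rw [← Finset.range_orderEmbOfFin s h, ← Finset.range_orderEmbOfFin s' h']
  have : (⇑(s.orderEmbOfFin h)) = ⇑(s'.orderEmbOfFin h') := funext hval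
  rw [this]

end Aux

noncomputable def esdW (d r : ℕ) (x : ℝ) (s : Finset (Fin d)) : ℝ :=
  if h : s.card = r then
    x ^ (∑ j : Fin r, ((s.orderEmbOfFin h j : ℕ) - (j : ℕ))) else 0

lemma esd_sum_lt (d r : ℕ) (hr1 : 1 ≤ r) (hrd : r ≤ d) (x : ℝ) (hx0 : 0 < x)
    (hx4 : x ≤ 1 / 4) :
    ∑ s ∈ (univ : Finset (Fin d)).powersetCard r, esdW d r x s < 1 + 2 * x := by
  have hx1 : x < 1 := by linarith
  set PS := (univ : Finset (Fin d)).powersetCard r with hPS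
  have hcard : ∀ t : {s // s ∈ PS}, t.1.card = r :=
    fun t => (Finset.mem_powersetCard.mp t.2).2
  -- gap map
  set Ψ : {s // s ∈ PS} → (Fin r → ℕ) := fun t => esdPhi d r t.1 (hcard t) with hΨ
  -- term rewrite
  have hterm : ∀ t : {s // s ∈ PS},
      esdW d r x t.1 = ∏ j : Fin r, (x ^ (r - (j : ℕ))) ^ (Ψ t j) := by
    intro t
    rw [esdW, dif_pos (hcard t), esd_M d r t.1 (hcard t), ← Finset.prod_pow_eq_pow_sum]
    rw [← Fin.prod_univ_eq_prod_range (fun l => x ^ ((r - l) * esdPhi' d r t.1 (hcard t) l)) r]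
    refine Finset.prod_congr rfl fun j _ => ?_
    have : esdPhi' d r t.1 (hcard t) (j : ℕ) = Ψ t j := by
      rw [esdPhi', dif_pos j.isLt]
    rw [this, pow_mul]
  have hsum1 : ∑ s ∈ PS, esdW d r x s
      = ∑ t ∈ PS.attach, ∏ j : Fin r, (x ^ (r - (j : ℕ))) ^ (Ψ t j) := by
    rw [← Finset.sum_attach PS (esdW d r x)]
    exact Finset.sum_congr rfl fun t _ => hterm t
  have hinj : ∀ t ∈ PS.attach, ∀ t' ∈ PS.attach, Ψ t = Ψ t' → t = t' := by
    intro t _ t' _ he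
    exact Subtype.ext (esd_inj d r t.1 t'.1 (hcard t) (hcard t')
      (fun j => congrFun he j))
  have hsum2 : ∑ t ∈ PS.attach, ∏ j : Fin r, (x ^ (r - (j : ℕ))) ^ (Ψ t j)
      = ∑ f ∈ PS.attach.image Ψ, ∏ j : Fin r, (x ^ (r - (j : ℕ))) ^ (f j) :=
    (Finset.sum_image (g := Ψ)
      (f := fun f => ∏ j : Fin r, (x ^ (r - (j : ℕ))) ^ (f j)) hinj).symm
  have hsub : PS.attach.image Ψ ⊆ Fintype.piFinset (fun _ : Fin r => range d) := by
    intro f hf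
    rw [Finset.mem_image] at hf
    obtain ⟨t, _, rfl⟩ := hf
    rw [Fintype.mem_piFinset]
    intro j
    rw [Finset.mem_range]
    exact esd_phi_lt d r t.1 (hcard t) j
  have hsum3 : ∑ f ∈ PS.attach.image Ψ, ∏ j : Fin r, (x ^ (r - (j : ℕ))) ^ (f j)
      ≤ ∑ f ∈ Fintype.piFinset (fun _ : Fin r => range d),
          ∏ j : Fin r, (x ^ (r - (j : ℕ))) ^ (f j) := by
    refine Finset.sum_le_sum_of_subset_of_nonneg hsub fun f _ _ => ?_
    exact Finset.prod_nonneg fun j _ => pow_nonneg (pow_nonneg hx0.le _) _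
  have hsum4 : ∑ f ∈ Fintype.piFinset (fun _ : Fin r => range d),
        ∏ j : Fin r, (x ^ (r - (j : ℕ))) ^ (f j)
      = ∏ j : Fin r, ∑ g ∈ range d, (x ^ (r - (j : ℕ))) ^ g :=
    (Finset.prod_univ_sum _ _).symm
  -- bound factors
  have hylt : ∀ j : Fin r, x ^ (r - (j : ℕ)) < 1 := by
    intro j
    calc x ^ (r - (j:ℕ)) ≤ x ^ 1 :=
          pow_le_pow_of_le_one hx0.le hx1.le (by omega)
    _ = x := pow_one x
    _ < 1 := hx1
  have hfac : ∀ j : Fin r, ∑ g ∈ range d, (x ^ (r - (j : ℕ))) ^ g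
      ≤ (1 - x ^ (r - (j : ℕ)))⁻¹ := fun j =>
    esd_geom _ (pow_nonneg hx0.le _) (hylt j) d
  have hprod1 : ∏ j : Fin r, ∑ g ∈ range d, (x ^ (r - (j : ℕ))) ^ g
      ≤ ∏ j : Fin r, (1 - x ^ (r - (j : ℕ)))⁻¹ := by
    refine Finset.prod_le_prod (fun j _ => ?_) (fun j _ => hfac j)
    exact Finset.sum_nonneg fun g _ => pow_nonneg (pow_nonneg hx0.le _) _
  -- Weierstrass
  set T : ℝ := ∑ j : Fin r, x ^ (r - (j : ℕ)) with hT
  have hT0 : 0 ≤ T := Finset.sum_nonneg fun j _ => pow_nonneg hx0.le _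
  have hTx : T < x * (1 - x)⁻¹ := by
    have hrefl := Finset.sum_range_reflect (fun j => x ^ (r - j)) r
    have h1 : T = ∑ j ∈ range r, x ^ (r - j) :=
      Fin.sum_univ_eq_sum_range (fun j => x ^ (r - j)) r
    have h2 : ∑ j ∈ range r, x ^ (r - (r - 1 - j)) = ∑ j ∈ range r, x ^ (j + 1) := by
      refine Finset.sum_congr rfl fun j hj => ?_
      rw [Finset.mem_range] at hj
      congr 1
      omega
    have h3 : ∑ j ∈ range r, x ^ (j + 1) = x * ∑ j ∈ range r, x ^ j := by
      rw [Finset.mul_sum]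
      exact Finset.sum_congr rfl fun j _ => by ring
    have h4 : ∑ j ∈ range r, x ^ j < (1 - x)⁻¹ := esd_geom_lt x hx0 hx1 r
    rw [h1, ← hrefl, h2, h3]
    exact mul_lt_mul_of_pos_left h4 hx0
  have hxx : (0:ℝ) < 1 - x := by linarith
  have hA : T * (1 - x) < x := by
    have := mul_lt_mul_of_pos_right hTx hxx
    rwa [mul_assoc, inv_mul_cancel₀ (ne_of_gt hxx), mul_one] at this
  have hT3 : T ≤ 1 / 3 := by nlinarith [mul_le_mul_of_nonneg_left hx4 hT0]
  have hwei : 1 - T ≤ ∏ j : Fin r, (1 - x ^ (r - (j : ℕ))) := by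
    rw [hT]
    exact esd_weier univ (fun j : Fin r => x ^ (r - (j:ℕ)))
      (fun j _ => pow_nonneg hx0.le _) (fun j _ => (hylt j).le)
  have hT1 : (0:ℝ) < 1 - T := by linarith
  have hprodpos : 0 < ∏ j : Fin r, (1 - x ^ (r - (j : ℕ))) :=
    Finset.prod_pos fun j _ => by linarith [hylt j]
  have hprod2 : ∏ j : Fin r, (1 - x ^ (r - (j : ℕ)))⁻¹ ≤ (1 - T)⁻¹ := by
    rw [Finset.prod_inv_distrib]
    exact inv_anti₀ hT1 hwei
  have hfin : (1 - T)⁻¹ < 1 + 2 * x := by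
    rw [inv_lt_iff_one_lt_mul₀ hT1]
    nlinarith [mul_nonneg hx0.le hT0]
  calc ∑ s ∈ PS, esdW d r x s
      = ∑ f ∈ PS.attach.image Ψ, ∏ j : Fin r, (x ^ (r - (j : ℕ))) ^ (f j) := by
        rw [hsum1, hsum2]
    _ ≤ ∏ j : Fin r, ∑ g ∈ range d, (x ^ (r - (j : ℕ))) ^ g := by rw [← hsum4]; exact hsum3
    _ ≤ (1 - T)⁻¹ := le_trans hprod1 hprod2
    _ < 1 + 2 * x := hfin

/-- If `|ζ₁| > ⋯ > |ζ_d| > 0` with consecutive ratios below `2^{-(1+b)}` and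
`b ≥ 1 + log₂ d`, then the `r`-th elementary symmetric function equals
`ζ₁⋯ζ_r (1 + ε)` with `|ε| < 2^{-b}`. -/
theorem elementary_symmetric_dominant (d : ℕ) (b : ℝ)
    (hb : b ≥ 1 + Real.logb 2 d) (ζ : Fin d → ℂ)
    (hpos : ∀ i, 0 < ‖ζ i‖)
    (hratio : ∀ i j : Fin d, (i : ℕ) + 1 = (j : ℕ) →
      ‖ζ j‖ / ‖ζ i‖ < (2 : ℝ) ^ (-(1 + b)))
    (r : ℕ) (hr1 : 1 ≤ r) (hrd : r ≤ d) :
    ∃ ε : ℂ, ‖ε‖ < (2 : ℝ) ^ (-b) ∧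
      ∑ s ∈ Finset.univ.powersetCard r, ∏ i ∈ s, ζ i =
        (∏ t : Fin r, ζ ⟨t, lt_of_lt_of_le t.isLt hrd⟩) * (1 + ε) := by
  have hd1 : 1 ≤ d := le_trans hr1 hrd
  have hb1 : (1:ℝ) ≤ b := by
    have hlog : 0 ≤ Real.logb 2 d :=
      Real.logb_nonneg (by norm_num) (by exact_mod_cast hd1)
    linarith
  set ρ : ℝ := (2:ℝ) ^ (-(1+b)) with hρ
  have hρ0 : 0 < ρ := Real.rpow_pos_of_pos (by norm_num) _
  have hρ4 : ρ ≤ 1/4 := by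
    have h1 : ρ ≤ (2:ℝ) ^ (-2 : ℝ) :=
      Real.rpow_le_rpow_of_exponent_le (by norm_num) (by linarith)
    have h2 : (2:ℝ) ^ (-2:ℝ) = 1/4 := by
      rw [show (-2:ℝ) = ((-2:ℤ):ℝ) by norm_num, Real.rpow_intCast]
      norm_num
    rw [h2] at h1
    linarith
  have h2b : (2:ℝ) ^ (-b) = 2 * ρ := by
    rw [hρ, show -b = 1 + (-(1+b)) by ring, Real.rpow_add (by norm_num), Real.rpow_one]
  set Pr : ℂ := ∏ t : Fin r, ζ ⟨t, lt_of_lt_of_le t.isLt hrd⟩ with hPr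
  have hPrne : Pr ≠ 0 := by
    rw [hPr]
    refine Finset.prod_ne_zero_iff.mpr fun t _ => ?_
    intro h0
    have := hpos ⟨t, lt_of_lt_of_le t.isLt hrd⟩
    rw [h0] at this
    simp at this
  have habsPr : 0 < ‖Pr‖ := norm_pos_iff.mpr hPrne
  have hchain : ∀ n : ℕ, ∀ i k : Fin d, (k:ℕ) = (i:ℕ) + n →
      ‖ζ k‖ ≤ ‖ζ i‖ * ρ ^ n := by
    intro n
    induction n with
    | zero =>
      intro i k hk
      have : k = i := Fin.ext (by omega)
      subst this
      simp
    | succ n ih =>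
      intro i k hk
      have hjlt : (i:ℕ) + n < d := by omega
      have h1 := ih i ⟨(i:ℕ) + n, hjlt⟩ (by simp only [Fin.val_mk])
      have h2 := hratio ⟨(i:ℕ) + n, hjlt⟩ k (by simp only [Fin.val_mk]; omega)
      have hj0 := hpos ⟨(i:ℕ) + n, hjlt⟩
      rw [div_lt_iff₀ hj0] at h2
      calc ‖ζ k‖ ≤ ρ * ‖ζ ⟨(i:ℕ) + n, hjlt⟩‖ := by linarith
        _ ≤ ρ * (‖ζ i‖ * ρ ^ n) := mul_le_mul_of_nonneg_left h1 hρ0.le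
        _ = ‖ζ i‖ * ρ ^ (n+1) := by ring
  set s₀ : Finset (Fin d) := univ.map (Fin.castLEOrderEmb hrd).toEmbedding with hs₀
  have hs₀card : s₀.card = r := by
    rw [hs₀, Finset.card_map, Finset.card_univ, Fintype.card_fin]
  have hs₀mem : s₀ ∈ (univ : Finset (Fin d)).powersetCard r :=
    Finset.mem_powersetCard.mpr ⟨Finset.subset_univ _, hs₀card⟩
  have hs₀emb : s₀.orderEmbOfFin hs₀card = Fin.castLEOrderEmb hrd :=
    (Finset.orderEmbOfFin_unique' hs₀card
      (fun x => Finset.mem_map_of_mem _ (Finset.mem_univ x))).symm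
  have hPs₀ : ∏ i ∈ s₀, ζ i = Pr := by
    rw [hs₀, Finset.prod_map, hPr]
    refine Finset.prod_congr rfl fun t _ => ?_
    congr 1
  have hWs₀ : esdW d r ρ s₀ = 1 := by
    rw [esdW, dif_pos hs₀card]
    have hz : (∑ j : Fin r, ((s₀.orderEmbOfFin hs₀card j : ℕ) - (j:ℕ))) = 0 := by
      rw [hs₀emb]
      exact Finset.sum_eq_zero fun j _ => by simp
    rw [hz]
    exact pow_zero ρ
  have hterm : ∀ s ∈ (univ : Finset (Fin d)).powersetCard r,
      ‖∏ i ∈ s, ζ i‖ ≤ ‖Pr‖ * esdW d r ρ s := by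
    intro s hs
    have hc : s.card = r := (Finset.mem_powersetCard.mp hs).2
    have hmap : univ.map (s.orderEmbOfFin hc).toEmbedding = s := by
      apply Finset.eq_of_subset_of_card_le
      · intro i hi
        rw [Finset.mem_map] at hi
        obtain ⟨j, _, rfl⟩ := hi
        exact Finset.orderEmbOfFin_mem s hc j
      · rw [Finset.card_map, Finset.card_univ, Fintype.card_fin, hc]
    rw [esdW, dif_pos hc]
    have hprodeq : ∏ i ∈ s, ζ i = ∏ j : Fin r, ζ ((s.orderEmbOfFin hc).toEmbedding j) := by
      conv_lhs => rw [← hmap]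
      exact Finset.prod_map univ (s.orderEmbOfFin hc).toEmbedding ζ
    rw [hprodeq, norm_prod]
    have hle : ∀ j : Fin r, ‖ζ ((s.orderEmbOfFin hc).toEmbedding j)‖
        ≤ ‖ζ ⟨(j:ℕ), lt_of_lt_of_le j.isLt hrd⟩‖ *
          ρ ^ ((s.orderEmbOfFin hc j : ℕ) - (j:ℕ)) := by
      intro j
      have hjle : (j:ℕ) ≤ (s.orderEmbOfFin hc j : ℕ) :=
        esd_strictmono_le _ (s.orderEmbOfFin hc).strictMono j
      exact hchain _ ⟨(j:ℕ), lt_of_lt_of_le j.isLt hrd⟩ (s.orderEmbOfFin hc j)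
        (by simp only [Fin.val_mk]; omega)
    calc ∏ j : Fin r, ‖ζ ((s.orderEmbOfFin hc).toEmbedding j)‖
        ≤ ∏ j : Fin r, (‖ζ ⟨(j:ℕ), lt_of_lt_of_le j.isLt hrd⟩‖ *
            ρ ^ ((s.orderEmbOfFin hc j : ℕ) - (j:ℕ))) :=
          Finset.prod_le_prod (fun j _ => norm_nonneg _) (fun j _ => hle j)
      _ = (∏ j : Fin r, ‖ζ ⟨(j:ℕ), lt_of_lt_of_le j.isLt hrd⟩‖) *
            ∏ j : Fin r, ρ ^ ((s.orderEmbOfFin hc j : ℕ) - (j:ℕ)) :=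
          Finset.prod_mul_distrib
      _ = ‖Pr‖ * ρ ^ (∑ j : Fin r, ((s.orderEmbOfFin hc j : ℕ) - (j:ℕ))) := by
          rw [hPr, norm_prod, Finset.prod_pow_eq_pow_sum]
  set S : ℂ := ∑ s ∈ Finset.univ.powersetCard r, ∏ i ∈ s, ζ i with hS
  refine ⟨S / Pr - 1, ?_, ?_⟩
  · rw [show S / Pr - 1 = (S - Pr) / Pr by rw [sub_div, div_self hPrne], norm_div,
      div_lt_iff₀ habsPr]
    have hsplit : S - Pr = ∑ s ∈ (Finset.univ.powersetCard r).erase s₀, ∏ i ∈ s, ζ i := by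
      have h := Finset.add_sum_erase _ (fun s => ∏ i ∈ s, ζ i) hs₀mem
      beta_reduce at h
      rw [hPs₀] at h
      rw [hS, ← h]
      ring
    rw [hsplit]
    have h1 : ‖∑ s ∈ (Finset.univ.powersetCard r).erase s₀, ∏ i ∈ s, ζ i‖
        ≤ ∑ s ∈ (Finset.univ.powersetCard r).erase s₀, ‖∏ i ∈ s, ζ i‖ :=
      norm_sum_le _ _
    have h2 : ∑ s ∈ (Finset.univ.powersetCard r).erase s₀, ‖∏ i ∈ s, ζ i‖
        ≤ ∑ s ∈ (Finset.univ.powersetCard r).erase s₀, ‖Pr‖ * esdW d r ρ s :=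
      Finset.sum_le_sum fun s hs => hterm s (Finset.mem_of_mem_erase hs)
    have h4 : ∑ s ∈ (Finset.univ.powersetCard r).erase s₀, esdW d r ρ s < 2 * ρ := by
      have htot := esd_sum_lt d r hr1 hrd ρ hρ0 hρ4
      have h := Finset.add_sum_erase _ (esdW d r ρ) hs₀mem
      rw [hWs₀] at h
      linarith
    have h5 : ∑ s ∈ (Finset.univ.powersetCard r).erase s₀, ‖Pr‖ * esdW d r ρ s
        = ‖Pr‖ * ∑ s ∈ (Finset.univ.powersetCard r).erase s₀, esdW d r ρ s :=
      (Finset.mul_sum _ _ _).symm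
    rw [h2b]
    have h6 : ‖Pr‖ *
        (∑ s ∈ (Finset.univ.powersetCard r).erase s₀, esdW d r ρ s)
        < ‖Pr‖ * (2 * ρ) := by
      exact mul_lt_mul_of_pos_left h4 habsPr
    calc ‖∑ s ∈ (Finset.univ.powersetCard r).erase s₀, ∏ i ∈ s, ζ i‖
        ≤ ‖Pr‖ * ∑ s ∈ (Finset.univ.powersetCard r).erase s₀, esdW d r ρ s := by
          rw [← h5]; exact le_trans h1 h2
      _ < ‖Pr‖ * (2 * ρ) := h6
      _ = 2 * ρ * ‖Pr‖ := by ring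
  · field_simp
    ring
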